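/- Let T > 0 and let θ : ℝ → ℝ be three times continuously differentiable with sup|θ''| and sup|θ'''| finite. Define V₂ₖ(t,x) = e^{-k² t} ( 4 k² t θ''(x) cos(kx) + 2 k t θ'''(x) sin(kx) ). Then for every integer k ≥ 1, ∫₀ᵀ ‖V₂ₖ(t,·)‖_{L²(0,π)} dt ≤ √π ( 4 sup|θ''| + 2 sup|θ'''| ) / k². -/

import Mathlib

open Real MeasureTheory intervalIntegral

/-- Third source-term estimate: with
`V₂ₖ(t,x) = e^{-k²t}(4k²t θ''(x) cos(kx) + 2kt θ'''(x) sin(kx))` one has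
`∫₀ᵀ ‖V₂ₖ(t,·)‖_{L²(0,π)} dt ≤ √π (4 sup|θ''| + 2 sup|θ'''|)/k²`. -/
theorem stmt_4 (T : ℝ) (hT : 0 < T) (θ : ℝ → ℝ) (hθ : ContDiff ℝ 3 θ)
    (A B : ℝ) (hA : ∀ x : ℝ, |iteratedDeriv 2 θ x| ≤ A)
    (hB : ∀ x : ℝ, |iteratedDeriv 3 θ x| ≤ B)
    (V : ℕ → ℝ → ℝ → ℝ)
    (hV : ∀ (k : ℕ) (t x : ℝ), V k t x =
      Real.exp (-(k : ℝ) ^ 2 * t) *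
        (4 * (k : ℝ) ^ 2 * t * iteratedDeriv 2 θ x * Real.cos (k * x)
          + 2 * (k : ℝ) * t * iteratedDeriv 3 θ x * Real.sin (k * x)))
    (k : ℕ) (hk : 1 ≤ k) :
    ∫ t in (0 : ℝ)..T, Real.sqrt (∫ x in (0 : ℝ)..π, (V k t x) ^ 2)
      ≤ Real.sqrt π * (4 * A + 2 * B) / (k : ℝ) ^ 2 := by
  have hA0 : 0 ≤ A := le_trans (abs_nonneg _) (hA 0)
  have hB0 : 0 ≤ B := le_trans (abs_nonneg _) (hB 0)
  have hk1 : (1 : ℝ) ≤ (k : ℝ) := by exact_mod_cast hk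
  have ha : (0 : ℝ) < (k : ℝ) ^ 2 := by positivity
  set a : ℝ := (k : ℝ) ^ 2 with ha_def
  set C : ℝ := 4 * A + 2 * B with hC_def
  have hC0 : 0 ≤ C := by positivity
  have hcont2 : Continuous (iteratedDeriv 2 θ) :=
    hθ.continuous_iteratedDeriv 2 (by norm_num)
  have hcont3 : Continuous (iteratedDeriv 3 θ) :=
    hθ.continuous_iteratedDeriv 3 (by norm_num)
  have hVcont : Continuous (fun p : ℝ × ℝ => V k p.1 p.2) := by
    have : (fun p : ℝ × ℝ => V k p.1 p.2) = fun p : ℝ × ℝ =>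
        Real.exp (-(k : ℝ) ^ 2 * p.1) *
        (4 * (k : ℝ) ^ 2 * p.1 * iteratedDeriv 2 θ p.2 * Real.cos (k * p.2)
          + 2 * (k : ℝ) * p.1 * iteratedDeriv 3 θ p.2 * Real.sin (k * p.2)) := by
      funext p; exact hV k p.1 p.2
    rw [this]; fun_prop
  -- pointwise bound
  have key : ∀ t : ℝ, 0 ≤ t → ∀ x : ℝ,
      |V k t x| ≤ Real.exp (-a * t) * (a * t * C) := by
    intro t ht x
    rw [hV, abs_mul, Real.abs_exp]
    set u := iteratedDeriv 2 θ x with hu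
    set v := iteratedDeriv 3 θ x with hvdef
    have huc : |u * Real.cos (k * x)| ≤ A := by
      rw [abs_mul]
      calc |u| * |Real.cos (k * x)| ≤ A * 1 :=
            mul_le_mul (hA x) (Real.abs_cos_le_one _) (abs_nonneg _) hA0
        _ = A := mul_one A
    have hvs : |v * Real.sin (k * x)| ≤ B := by
      rw [abs_mul]
      calc |v| * |Real.sin (k * x)| ≤ B * 1 :=
            mul_le_mul (hB x) (Real.abs_sin_le_one _) (abs_nonneg _) hB0
        _ = B := mul_one B
    have h1 : |4 * (k : ℝ) ^ 2 * t * u * Real.cos (k * x)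
        + 2 * (k : ℝ) * t * v * Real.sin (k * x)| ≤ a * t * C := by
      calc |4 * (k : ℝ) ^ 2 * t * u * Real.cos (k * x)
            + 2 * (k : ℝ) * t * v * Real.sin (k * x)|
          = |(4 * (k : ℝ) ^ 2 * t) * (u * Real.cos (k * x))
            + (2 * (k : ℝ) * t) * (v * Real.sin (k * x))| := by congr 1; ring
        _ ≤ |(4 * (k : ℝ) ^ 2 * t) * (u * Real.cos (k * x))|
            + |(2 * (k : ℝ) * t) * (v * Real.sin (k * x))| := abs_add_le _ _
        _ = (4 * (k : ℝ) ^ 2 * t) * |u * Real.cos (k * x)|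
            + (2 * (k : ℝ) * t) * |v * Real.sin (k * x)| := by
              have e1 : |(4 * (k:ℝ)^2 * t)| = 4 * (k:ℝ)^2 * t := abs_of_nonneg (by positivity)
              have e2 : |(2 * (k:ℝ) * t)| = 2 * (k:ℝ) * t := abs_of_nonneg (by positivity)
              rw [abs_mul (4 * (k:ℝ)^2 * t), abs_mul (2 * (k:ℝ) * t), e1, e2]
        _ ≤ (4 * (k : ℝ) ^ 2 * t) * A + (2 * (k : ℝ) * t) * B := by
              apply add_le_add
              · exact mul_le_mul_of_nonneg_left huc (by positivity)
              · exact mul_le_mul_of_nonneg_left hvs (by positivity)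
        _ ≤ a * t * C := by
              rw [ha_def, hC_def]
              have hkk : (0:ℝ) ≤ (k:ℝ)^2 - (k:ℝ) := by nlinarith
              nlinarith [mul_nonneg (mul_nonneg ht hB0) hkk]
    exact mul_le_mul_of_nonneg_left h1 (Real.exp_pos _).le
  -- inner integral bound
  have inner_bound : ∀ t : ℝ, 0 ≤ t →
      Real.sqrt (∫ x in (0:ℝ)..π, (V k t x) ^ 2)
        ≤ Real.sqrt π * (Real.exp (-a * t) * (a * t * C)) := by
    intro t ht
    set M : ℝ := Real.exp (-a * t) * (a * t * C) with hM
    have hM0 : 0 ≤ M := by positivity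
    have hIle : (∫ x in (0:ℝ)..π, (V k t x) ^ 2) ≤ ∫ x in (0:ℝ)..π, M ^ 2 := by
      apply intervalIntegral.integral_mono_on Real.pi_pos.le
      · exact ((hVcont.comp (by fun_prop : Continuous fun x : ℝ => ((t, x) : ℝ × ℝ))).pow 2).intervalIntegrable _ _
      · exact intervalIntegrable_const
      · intro x _
        calc (V k t x) ^ 2 = |V k t x| ^ 2 := (sq_abs _).symm
          _ ≤ M ^ 2 := pow_le_pow_left₀ (abs_nonneg _) (key t ht x) 2
    have hconst : (∫ x in (0:ℝ)..π, (M:ℝ) ^ 2) = π * M ^ 2 := by simp [mul_comm]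
    calc Real.sqrt (∫ x in (0:ℝ)..π, (V k t x) ^ 2)
        ≤ Real.sqrt (π * M ^ 2) := by
          apply Real.sqrt_le_sqrt; rw [← hconst]; exact hIle
      _ = Real.sqrt π * M := by
          rw [Real.sqrt_mul Real.pi_pos.le, Real.sqrt_sq hM0]
  -- integrability of LHS
  have hLHScont : Continuous fun t : ℝ => Real.sqrt (∫ x in (0:ℝ)..π, (V k t x) ^ 2) := by
    apply Real.continuous_sqrt.comp
    exact intervalIntegral.continuous_parametric_intervalIntegral_of_continuous'
      (f := fun t x => (V k t x) ^ 2) (by fun_prop) 0 π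
  -- compare integrals
  have step1 : (∫ t in (0:ℝ)..T, Real.sqrt (∫ x in (0:ℝ)..π, (V k t x) ^ 2))
      ≤ ∫ t in (0:ℝ)..T, Real.sqrt π * (Real.exp (-a * t) * (a * t * C)) := by
    apply intervalIntegral.integral_mono_on hT.le
    · exact hLHScont.intervalIntegrable _ _
    · exact (by fun_prop : Continuous fun t : ℝ => Real.sqrt π * (Real.exp (-a * t) * (a * t * C))).intervalIntegrable _ _
    · intro t ht; exact inner_bound t ht.1
  -- compute RHS integral via FTC
  have hderiv : ∀ t : ℝ, HasDerivAt (fun t => -((a * t + 1) * Real.exp (-a * t)) / a)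
      (a * t * Real.exp (-a * t)) t := by
    intro t
    have h1 : HasDerivAt (fun t : ℝ => a * t + 1) a t := by
      simpa using ((hasDerivAt_id t).const_mul a).add_const 1
    have h2 : HasDerivAt (fun t : ℝ => Real.exp (-a * t)) (Real.exp (-a * t) * (-a)) t := by
      simpa [mul_comm] using (((hasDerivAt_id t).const_mul (-a)).exp)
    have h3 := ((h1.mul h2).neg).div_const a
    convert h3 using 1
    any_goals rfl
    rw [eq_div_iff ha.ne']
    ring
  have hint : (∫ t in (0:ℝ)..T, a * t * Real.exp (-a * t))
      = -((a * T + 1) * Real.exp (-a * T)) / a - -((a * 0 + 1) * Real.exp (-a * 0)) / a := by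
    apply intervalIntegral.integral_eq_sub_of_hasDerivAt (fun t _ => hderiv t)
    exact (by fun_prop : Continuous fun t : ℝ => a * t * Real.exp (-a * t)).intervalIntegrable _ _
  have hint_le : (∫ t in (0:ℝ)..T, a * t * Real.exp (-a * t)) ≤ 1 / a := by
    rw [hint]
    have h1 : 0 ≤ (a * T + 1) * Real.exp (-a * T) := by positivity
    have h2 : -((a * 0 + 1) * Real.exp (-a * 0)) / a = -(1 / a) := by
      simp
      ring
    rw [h2, neg_div]
    have h3 := div_nonneg h1 ha.le
    linarith
  have step2 : (∫ t in (0:ℝ)..T, Real.sqrt π * (Real.exp (-a * t) * (a * t * C)))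
      = Real.sqrt π * C * ∫ t in (0:ℝ)..T, a * t * Real.exp (-a * t) := by
    rw [← intervalIntegral.integral_const_mul]
    congr 1; funext t; ring
  have hsc : 0 ≤ Real.sqrt π * C := by positivity
  have final : Real.sqrt π * C * ∫ t in (0:ℝ)..T, a * t * Real.exp (-a * t)
      ≤ Real.sqrt π * C / a := by
    calc Real.sqrt π * C * ∫ t in (0:ℝ)..T, a * t * Real.exp (-a * t)
        ≤ Real.sqrt π * C * (1 / a) := mul_le_mul_of_nonneg_left hint_le hsc
      _ = Real.sqrt π * C / a := by ring
  rw [hC_def, ha_def] at final step2 step1 ⊢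
  calc _ ≤ _ := step1
    _ = _ := step2
    _ ≤ _ := final
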